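/- For every positive integer n, the polynomial identity [n+1]_q · Σ_{T ∈ SYT(2×n)} q^{maj(T)} = q^n · [2n choose n]_q holds in ℤ[q]. -/
import Mathlib


open Polynomial

/-- The q-integer `[n]_q = 1 + q + ⋯ + q^(n-1)` in `ℤ[q]`. -/
noncomputable def qInt (n : ℕ) : Polynomial ℤ := ∑ i ∈ Finset.range n, X ^ i

/-- The Gaussian binomial coefficient `[a choose b]_q` in `ℤ[q]`, defined by the
standard q-Pascal recurrence `[n+1 choose k+1] = [n choose k] + q^(k+1) [n choose k+1]`. -/
noncomputable def qBinom : ℕ → ℕ → Polynomial ℤ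
  | _, 0 => 1
  | 0, _ + 1 => 0
  | n + 1, k + 1 => qBinom n k + X ^ (k + 1) * qBinom n (k + 1)

/-- Major index: sum of all `i` such that `i` appears in row 1 and `i+1` appears in row 2. -/
def maj {n : ℕ} (T : (Fin n → ℕ) × (Fin n → ℕ)) : ℕ :=
  ∑ i ∈ (Finset.image T.1 Finset.univ).filter (fun i => ∃ j, T.2 j = i + 1), i

/-- Standard Young tableaux of shape 2×n: rows and columns strictly increasing,
entry set exactly `{1, …, 2n}` (each value appearing exactly once). -/
def SYT (n : ℕ) : Set ((Fin n → ℕ) × (Fin n → ℕ)) :=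
  {T | StrictMono T.1 ∧ StrictMono T.2 ∧ (∀ i, T.1 i < T.2 i) ∧
    Set.range T.1 ∪ Set.range T.2 = Set.Icc 1 (2 * n)}


noncomputable def qFact : ℕ → Polynomial ℤ
  | 0 => 1
  | n + 1 => qFact n * qInt (n + 1)

lemma qInt_add (a b : ℕ) : qInt (a + b) = qInt a + X ^ a * qInt b := by
  simp [qInt, Finset.sum_range_add, Finset.mul_sum, pow_add]

lemma qInt_eval_one (n : ℕ) : eval 1 (qInt n) = n := by
  simp [qInt]

lemma qFact_eval_one (n : ℕ) : eval 1 (qFact n) = n.factorial := by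
  induction n with
  | zero => simp [qFact]
  | succ n ih => simp [qFact, ih, qInt_eval_one, Nat.factorial_succ, mul_comm]

lemma qFact_ne_zero (n : ℕ) : qFact n ≠ 0 := by
  intro h
  have := qFact_eval_one n
  rw [h] at this
  simp at this
  exact_mod_cast (Nat.factorial_ne_zero n) (by exact_mod_cast this.symm)

lemma qBinom_zero_right (n : ℕ) : qBinom n 0 = 1 := by cases n <;> rfl

lemma qBinom_eq_zero : ∀ {n k : ℕ}, n < k → qBinom n k = 0 := by
  intro n
  induction n with
  | zero => intro k hk; cases k with
    | zero => omega
    | succ k => rfl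
  | succ n ih =>
    intro k hk
    cases k with
    | zero => omega
    | succ k =>
      show qBinom n k + X ^ (k+1) * qBinom n (k+1) = 0
      rw [ih (by omega), ih (by omega)]; ring

lemma qBinom_diag (n : ℕ) : qBinom n n = 1 := by
  induction n with
  | zero => rfl
  | succ n ih =>
    show qBinom n n + X ^ (n+1) * qBinom n (n+1) = 1
    rw [ih, qBinom_eq_zero (by omega)]; ring

lemma qBinom_mul_qFact : ∀ n k : ℕ, k ≤ n →
    qBinom n k * (qFact k * qFact (n - k)) = qFact n := by
  intro n
  induction n with
  | zero => intro k hk; interval_cases k; simp [qBinom_zero_right, qFact]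
  | succ n ih =>
    intro k hk
    cases k with
    | zero => simp [qBinom_zero_right, qFact]
    | succ j =>
      rcases Nat.lt_or_ge j n with hj | hj
      · -- j + 1 ≤ n
        show (qBinom n j + X ^ (j+1) * qBinom n (j+1)) * _ = _
        have h1 : n + 1 - (j + 1) = n - j := by omega
        have h2 : qFact (j + 1) = qFact j * qInt (j + 1) := rfl
        have h3 : qFact (n - j) = qFact (n - j - 1) * qInt (n - j) := by
          have : n - j = (n - j - 1) + 1 := by omega
          rw [this]; rfl
        have h4 : n - (j+1) = n - j - 1 := by omega
        have e1 := ih j (by omega)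
        have e2 := ih (j+1) (by omega)
        rw [h4] at e2
        have key : qInt (j + 1 + (n - j)) = qInt (j+1) + X ^ (j+1) * qInt (n - j) :=
          qInt_add _ _
        have hnj : j + 1 + (n - j) = n + 1 := by omega
        rw [hnj] at key
        calc (qBinom n j + X ^ (j+1) * qBinom n (j+1)) * (qFact (j+1) * qFact (n+1 - (j+1)))
            = (qBinom n j * (qFact j * qFact (n - j))) * qInt (j+1)
              + X ^ (j+1) * ((qBinom n (j+1) * (qFact (j+1) * qFact (n - j - 1))) * qInt (n - j)) := by
              rw [h1, h2, h3]; ring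
          _ = qFact n * qInt (j+1) + X ^ (j+1) * (qFact n * qInt (n - j)) := by rw [e1, e2]
          _ = qFact n * (qInt (j+1) + X ^ (j+1) * qInt (n - j)) := by ring
          _ = qFact (n+1) := by rw [← key]; rfl
      · -- j ≥ n, so j = n
        have hjn : j = n := by omega
        rw [hjn, qBinom_diag, Nat.sub_self]
        show 1 * (qFact (n+1) * qFact 0) = qFact (n+1)
        show 1 * (qFact (n+1) * 1) = qFact (n+1)
        ring

lemma qFact_cancel {a b : Polynomial ℤ} (s t : ℕ)
    (h : a * (qFact s * qFact t) = b * (qFact s * qFact t)) : a = b :=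
  mul_right_cancel₀ (mul_ne_zero (qFact_ne_zero s) (qFact_ne_zero t)) h

/-- second Pascal -/
lemma qBinom_pascal2 (m k : ℕ) :
    qBinom (m+1) (k+1) = qBinom m (k+1) + X ^ (m - k) * qBinom m k := by
  rcases Nat.lt_or_ge m k with h | h
  · rw [qBinom_eq_zero (by omega), qBinom_eq_zero (by omega), qBinom_eq_zero (by omega)]; ring
  rcases Nat.eq_or_lt_of_le h with heq | h'
  · subst heq
    rw [qBinom_diag, qBinom_diag, qBinom_eq_zero (by omega)]; simp
  -- k + 1 ≤ m
  apply qFact_cancel (k+1) (m - k)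
  have e0 := qBinom_mul_qFact (m+1) (k+1) (by omega)
  have h1 : m + 1 - (k+1) = m - k := by omega
  rw [h1] at e0
  rw [e0]
  symm
  have e1 := qBinom_mul_qFact m (k+1) (by omega)
  have e2 := qBinom_mul_qFact m k (by omega)
  have h3 : qFact (m - k) = qFact (m - k - 1) * qInt (m - k) := by
    have : m - k = (m - k - 1) + 1 := by omega
    rw [this]; rfl
  have h4 : m - (k+1) = m - k - 1 := by omega
  rw [h4] at e1
  have h5 : qFact (k + 1) = qFact k * qInt (k+1) := rfl
  have key : qInt ((m - k) + (k+1)) = qInt (m-k) + X ^ (m-k) * qInt (k+1) := qInt_add _ _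
  have hmk : (m - k) + (k + 1) = m + 1 := by omega
  rw [hmk] at key
  calc (qBinom m (k+1) + X ^ (m-k) * qBinom m k) * (qFact (k+1) * qFact (m-k))
      = (qBinom m (k+1) * (qFact (k+1) * qFact (m - k - 1))) * qInt (m-k)
        + X ^ (m-k) * ((qBinom m k * (qFact k * qFact (m-k))) * qInt (k+1)) := by
        rw [h3, h5]; ring
    _ = qFact m * qInt (m-k) + X ^ (m-k) * (qFact m * qInt (k+1)) := by rw [e1, e2]
    _ = qFact m * (qInt (m-k) + X ^ (m-k) * qInt (k+1)) := by ring
    _ = qFact (m+1) := by rw [← key]; rfl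

/-- central symmetry on odd rows -/
lemma qBinom_central (j : ℕ) : qBinom (2*j+1) j = qBinom (2*j+1) (j+1) := by
  apply qFact_cancel j (j+1)
  have e1 := qBinom_mul_qFact (2*j+1) j (by omega)
  have e2 := qBinom_mul_qFact (2*j+1) (j+1) (by omega)
  have h1 : 2*j+1 - j = j + 1 := by omega
  have h2 : 2*j+1 - (j+1) = j := by omega
  rw [h1] at e1; rw [h2] at e2
  calc qBinom (2*j+1) j * (qFact j * qFact (j+1)) = qFact (2*j+1) := e1
    _ = qBinom (2*j+1) (j+1) * (qFact (j+1) * qFact j) := by rw [e2]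
    _ = qBinom (2*j+1) (j+1) * (qFact j * qFact (j+1)) := by ring


lemma qInt_one : qInt 1 = 1 := by simp [qInt]

lemma final_identity (n : ℕ) (hn : 1 ≤ n) :
    qInt (n+1) * (X ^ n * qBinom (2*n-1) n - X ^ (n+1) * qBinom (2*n-1) (n+1))
      = X ^ n * qBinom (2*n) n := by
  match n, hn with
  | 1, _ =>
    have h1 : qBinom 1 1 = 1 := qBinom_diag 1
    have h2 : qBinom 1 2 = 0 := qBinom_eq_zero (by omega)
    have h3 : qBinom 2 1 = 1 + X := by
      show qBinom 1 0 + X ^ (0+1) * qBinom 1 1 = 1 + X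
      rw [qBinom_zero_right, h1]; ring
    have h4 : qInt 2 = 1 + X := by
      show (∑ i ∈ Finset.range 2, (X : Polynomial ℤ) ^ i) = 1 + X
      rw [Finset.sum_range_succ, Finset.sum_range_one]; ring
    norm_num [h1, h2, h3, h4]
    ring
  | (m+2), _ =>
    have hi1 : 2*(m+2)-1 = 2*m+3 := by omega
    have hi2 : 2*(m+2) = 2*m+4 := by omega
    rw [hi1, hi2]
    show qInt (m+3) * (X ^ (m+2) * qBinom (2*m+3) (m+2) - X ^ (m+3) * qBinom (2*m+3) (m+3))
      = X ^ (m+2) * qBinom (2*m+4) (m+2)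
    apply qFact_cancel (m+2) (m+2)
    have u1 : qFact (m+1) = qFact m * qInt (m+1) := rfl
    have u2 : qFact (m+2) = qFact m * qInt (m+1) * qInt (m+2) := by
      show qFact (m+1) * qInt (m+2) = _; rw [u1]
    have u3 : qFact (m+3) = qFact m * qInt (m+1) * qInt (m+2) * qInt (m+3) := by
      show qFact (m+2) * qInt (m+3) = _; rw [u2]
    have e1 := qBinom_mul_qFact (2*m+3) (m+2) (by omega)
    have h1 : 2*m+3 - (m+2) = m+1 := by omega
    rw [h1, u2, u1] at e1
    have e3 := qBinom_mul_qFact (2*m+3) (m+3) (by omega)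
    have h3 : 2*m+3 - (m+3) = m := by omega
    rw [h3, u3] at e3
    have e0 := qBinom_mul_qFact (2*m+4) (m+2) (by omega)
    have h0 : 2*m+4 - (m+2) = m+2 := by omega
    have u4 : qFact (2*m+4) = qFact (2*m+3) * qInt (2*m+4) := rfl
    rw [h0, u2, u4] at e0
    have ia : qInt (m+3) = qInt (m+2) + X ^ (m+2) := by
      have := qInt_add (m+2) 1
      norm_num [qInt_one] at this
      rw [this]
    have ic : qInt (2*m+4) = qInt (m+2) + X ^ (m+2) * qInt (m+2) := by
      have := qInt_add (m+2) (m+2)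
      have hx : (m+2)+(m+2) = 2*m+4 := by omega
      rw [hx] at this
      exact this
    have id' : qInt (m+2) = 1 + X * qInt (m+1) := by
      have := qInt_add 1 (m+1)
      have hx : 1 + (m+1) = m+2 := by omega
      rw [hx] at this
      rw [this, qInt_one, pow_one]
    rw [u2]
    linear_combination (X^(m+2) * qInt (m+3) * qInt (m+2)) * e1
      - (X^(m+3) * qInt (m+1) * qInt (m+2)) * e3
      - X^(m+2) * e0
      + (X^(m+2) * qFact (2*m+3) * qInt (m+2)) * ia
      + (X^(m+2) * qFact (2*m+3) * qInt (m+2)) * id'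
      - (X^(m+2) * qFact (2*m+3)) * ic


/-! ### Combinatorics of ballot subsets -/

def statF (A : Finset ℕ) : ℕ := ∑ i ∈ A.filter (fun i => i + 1 ∉ A), i

def Ballot (m : ℕ) (A : Finset ℕ) : Prop :=
  ∀ i ∈ Finset.Icc 1 m, i ≤ 2 * (A ∩ Finset.Icc 1 i).card

instance (m : ℕ) (A : Finset ℕ) : Decidable (Ballot m A) := by
  unfold Ballot; infer_instance

def Fset (m k : ℕ) : Finset (Finset ℕ) :=
  ((Finset.Icc 1 m).powersetCard k).filter (fun A => Ballot m A ∧ m ∉ A)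

def Gset (m k : ℕ) : Finset (Finset ℕ) :=
  ((Finset.Icc 1 m).powersetCard k).filter (fun A => Ballot m A ∧ m ∈ A)

noncomputable def SF (m k : ℕ) : Polynomial ℤ := ∑ A ∈ Fset m k, X ^ statF A
noncomputable def SG (m k : ℕ) : Polynomial ℤ := ∑ A ∈ Gset m k, X ^ statF A

lemma mem_Fset {m k : ℕ} {A : Finset ℕ} :
    A ∈ Fset m k ↔ A ⊆ Finset.Icc 1 m ∧ A.card = k ∧ Ballot m A ∧ m ∉ A := by
  simp [Fset, Finset.mem_powersetCard, and_assoc]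

lemma mem_Gset {m k : ℕ} {A : Finset ℕ} :
    A ∈ Gset m k ↔ A ⊆ Finset.Icc 1 m ∧ A.card = k ∧ Ballot m A ∧ m ∈ A := by
  simp [Gset, Finset.mem_powersetCard, and_assoc]

lemma disj_FG (m k : ℕ) : Disjoint (Fset m k) (Gset m k) := by
  rw [Finset.disjoint_left]
  intro A hF hG
  exact (mem_Fset.mp hF).2.2.2 (mem_Gset.mp hG).2.2.2

lemma inter_Icc_of_subset {A : Finset ℕ} {m i : ℕ} (h : A ⊆ Finset.Icc 1 m) (him : m ≤ i) :
    A ∩ Finset.Icc 1 i = A :=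
  Finset.inter_eq_left.mpr (h.trans (Finset.Icc_subset_Icc_right him))

lemma Ballot_restrict {m : ℕ} {A : Finset ℕ} (h : Ballot (m+1) A) : Ballot m A := by
  intro i hi
  rw [Finset.mem_Icc] at hi
  exact h i (Finset.mem_Icc.mpr ⟨hi.1, by omega⟩)

lemma Fset_succ (m k : ℕ) :
    Fset (m+1) k = if m+1 ≤ 2*k then Fset m k ∪ Gset m k else ∅ := by
  ext A
  split_ifs with h
  · simp only [Finset.mem_union, mem_Fset, mem_Gset]
    constructor
    · rintro ⟨hsub, hcard, hbal, hmem⟩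
      have hsub' : A ⊆ Finset.Icc 1 m := by
        intro x hx
        have hx2 := hsub hx
        rw [Finset.mem_Icc] at hx2 ⊢
        have : x ≠ m + 1 := fun he => hmem (he ▸ hx)
        omega
      rcases Finset.decidableMem m A with hm | hm
      · exact Or.inl ⟨hsub', hcard, Ballot_restrict hbal, hm⟩
      · exact Or.inr ⟨hsub', hcard, Ballot_restrict hbal, hm⟩
    · intro hc
      have key : A ⊆ Finset.Icc 1 m ∧ A.card = k ∧ Ballot m A := by
        rcases hc with ⟨h1, h2, h3, _⟩ | ⟨h1, h2, h3, _⟩ <;> exact ⟨h1, h2, h3⟩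
      obtain ⟨hsub, hcard, hbal⟩ := key
      have hmem : m + 1 ∉ A := fun hx => by
        have := Finset.mem_Icc.mp (hsub hx); omega
      refine ⟨hsub.trans (Finset.Icc_subset_Icc_right (by omega)), hcard, ?_, hmem⟩
      intro i hi
      rw [Finset.mem_Icc] at hi
      rcases Nat.lt_or_ge i (m+1) with hi' | hi'
      · exact hbal i (Finset.mem_Icc.mpr ⟨hi.1, by omega⟩)
      · have : i = m + 1 := by omega
        subst this
        rw [inter_Icc_of_subset hsub (by omega), hcard]
        exact h
  · simp only [Finset.notMem_empty, iff_false]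
    intro hA
    obtain ⟨hsub, hcard, hbal, _⟩ := mem_Fset.mp hA
    have := hbal (m+1) (Finset.mem_Icc.mpr ⟨by omega, le_refl _⟩)
    rw [inter_Icc_of_subset hsub (le_refl _), hcard] at this
    omega

lemma SF_succ (m k : ℕ) : SF (m+1) k = if m+1 ≤ 2*k then SF m k + SG m k else 0 := by
  unfold SF SG
  rw [Fset_succ]
  split_ifs with h
  · exact Finset.sum_union (disj_FG m k)
  · simp

lemma Gset_succ (m k : ℕ) :
    Gset (m+1) (k+1) = (Fset m k ∪ Gset m k).image (insert (m+1)) := by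
  ext A
  simp only [Finset.mem_image, Finset.mem_union, mem_Fset, mem_Gset]
  constructor
  · intro hA
    obtain ⟨hsub, hcard, hbal, hmem⟩ := mem_Gset.mp (mem_Gset.mpr hA)
    set A' := A.erase (m+1) with hA'
    have hins : insert (m+1) A' = A := Finset.insert_erase hmem
    have hsub' : A' ⊆ Finset.Icc 1 m := by
      intro x hx
      rw [Finset.mem_erase] at hx
      have := Finset.mem_Icc.mp (hsub hx.2)
      rw [Finset.mem_Icc]
      have := hx.1
      omega
    have hcard' : A'.card = k := by
      rw [hA', Finset.card_erase_of_mem hmem, hcard]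
      omega
    have hbal' : Ballot m A' := by
      intro i hi
      rw [Finset.mem_Icc] at hi
      have hAi : A' ∩ Finset.Icc 1 i = A ∩ Finset.Icc 1 i := by
        ext x
        simp only [Finset.mem_inter, Finset.mem_erase, Finset.mem_Icc, hA']
        constructor
        · rintro ⟨⟨_, h2⟩, h3⟩; exact ⟨h2, h3⟩
        · rintro ⟨h2, h3⟩; exact ⟨⟨by omega, h2⟩, h3⟩
      rw [hAi]
      exact hbal i (Finset.mem_Icc.mpr ⟨hi.1, by omega⟩)
    refine ⟨A', ?_, hins⟩
    rcases Finset.decidableMem m A' with hm | hm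
    · exact Or.inl ⟨hsub', hcard', hbal', hm⟩
    · exact Or.inr ⟨hsub', hcard', hbal', hm⟩
  · rintro ⟨A', hA', rfl⟩
    have key : A' ⊆ Finset.Icc 1 m ∧ A'.card = k ∧ Ballot m A' := by
      rcases hA' with ⟨h1, h2, h3, _⟩ | ⟨h1, h2, h3, _⟩ <;> exact ⟨h1, h2, h3⟩
    obtain ⟨hsub, hcard, hbal⟩ := key
    have hnot : m + 1 ∉ A' := fun hx => by
      have := Finset.mem_Icc.mp (hsub hx); omega
    refine ⟨?_, ?_, ?_, Finset.mem_insert_self _ _⟩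
    · intro x hx
      rcases Finset.mem_insert.mp hx with rfl | hx'
      · exact Finset.mem_Icc.mpr ⟨by omega, le_refl _⟩
      · exact (hsub.trans (Finset.Icc_subset_Icc_right (by omega))) hx'
    · rw [Finset.card_insert_of_notMem hnot, hcard]
    · intro i hi
      rw [Finset.mem_Icc] at hi
      rcases Nat.lt_or_ge i (m+1) with hi' | hi'
      · have hAi : insert (m+1) A' ∩ Finset.Icc 1 i = A' ∩ Finset.Icc 1 i := by
          ext x
          simp only [Finset.mem_inter, Finset.mem_insert, Finset.mem_Icc]
          constructor
          · rintro ⟨rfl | h2, h3⟩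
            · omega
            · exact ⟨h2, h3⟩
          · rintro ⟨h2, h3⟩; exact ⟨Or.inr h2, h3⟩
        rw [hAi]
        exact hbal i (Finset.mem_Icc.mpr ⟨hi.1, by omega⟩)
      · have : i = m + 1 := by omega
        subst this
        have hsub2 : insert (m+1) A' ⊆ Finset.Icc 1 (m+1) := by
          intro x hx
          rcases Finset.mem_insert.mp hx with rfl | hx'
          · exact Finset.mem_Icc.mpr ⟨by omega, le_refl _⟩
          · exact (hsub.trans (Finset.Icc_subset_Icc_right (by omega))) hx'
        rw [inter_Icc_of_subset hsub2 (le_refl _), Finset.card_insert_of_notMem hnot, hcard]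
        rcases Nat.eq_zero_or_pos m with rfl | hm
        · omega
        · have := hbal m (Finset.mem_Icc.mpr ⟨hm, le_refl _⟩)
          rw [inter_Icc_of_subset hsub (le_refl _), hcard] at this
          omega

lemma statF_insert_notmem {A : Finset ℕ} {m : ℕ} (hA : ∀ a ∈ A, a ≤ m) (hm : m ∉ A) :
    statF (insert (m+1) A) = statF A + (m+1) := by
  have hm1 : m + 1 ∉ A := fun h => by have := hA _ h; omega
  have hm2 : m + 2 ∉ insert (m+1) A := by
    simp only [Finset.mem_insert]
    push_neg
    exact ⟨by omega, fun h => by have := hA _ h; omega⟩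
  unfold statF
  rw [Finset.filter_insert, if_pos hm2]
  have hfe : A.filter (fun i => i + 1 ∉ insert (m+1) A) = A.filter (fun i => i + 1 ∉ A) := by
    apply Finset.filter_congr
    intro x hx
    simp only [Finset.mem_insert, not_or, eq_iff_iff]
    constructor
    · rintro ⟨_, h2⟩; exact h2
    · intro h2
      refine ⟨?_, h2⟩
      intro he
      have : x = m := by omega
      exact hm (this ▸ hx)
  rw [Finset.sum_insert (fun h => hm1 (Finset.filter_subset _ _ h)), hfe]
  omega

lemma statF_insert_mem {A : Finset ℕ} {m : ℕ} (hA : ∀ a ∈ A, a ≤ m) (hm : m ∈ A) :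
    statF (insert (m+1) A) = statF A + 1 := by
  have hm1 : m + 1 ∉ A := fun h => by have := hA _ h; omega
  have hm2 : m + 2 ∉ insert (m+1) A := by
    simp only [Finset.mem_insert]
    push_neg
    exact ⟨by omega, fun h => by have := hA _ h; omega⟩
  unfold statF
  rw [Finset.filter_insert, if_pos hm2]
  have hfe : A.filter (fun i => i + 1 ∉ insert (m+1) A) =
      (A.filter (fun i => i + 1 ∉ A)).erase m := by
    ext x
    simp only [Finset.mem_filter, Finset.mem_erase, Finset.mem_insert, not_or]
    constructor
    · rintro ⟨h1, h2, h3⟩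
      exact ⟨by omega, h1, h3⟩
    · rintro ⟨h1, h2, h3⟩
      exact ⟨h2, by omega, h3⟩
  have hmf : m ∈ A.filter (fun i => i + 1 ∉ A) := Finset.mem_filter.mpr ⟨hm, hm1⟩
  rw [Finset.sum_insert (fun h => hm1 (Finset.filter_subset _ _ h)), hfe]
  have := Finset.sum_erase_add (A.filter (fun i => i + 1 ∉ A)) id hmf
  simp only [id] at this
  omega

lemma SG_succ (m k : ℕ) : SG (m+1) (k+1) = X^(m+1) * SF m k + X * SG m k := by
  unfold SG
  rw [Gset_succ]
  have hinj : ∀ A ∈ Fset m k ∪ Gset m k, ∀ B ∈ Fset m k ∪ Gset m k,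
      insert (m+1) A = insert (m+1) B → A = B := by
    intro A hA B hB hAB
    have hmA : m + 1 ∉ A := by
      rcases Finset.mem_union.mp hA with h | h
      · exact fun hx => by have := Finset.mem_Icc.mp ((mem_Fset.mp h).1 hx); omega
      · exact fun hx => by have := Finset.mem_Icc.mp ((mem_Gset.mp h).1 hx); omega
    have hmB : m + 1 ∉ B := by
      rcases Finset.mem_union.mp hB with h | h
      · exact fun hx => by have := Finset.mem_Icc.mp ((mem_Fset.mp h).1 hx); omega
      · exact fun hx => by have := Finset.mem_Icc.mp ((mem_Gset.mp h).1 hx); omega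
    rw [← Finset.erase_insert hmA, ← Finset.erase_insert hmB, hAB]
  rw [Finset.sum_image hinj, Finset.sum_union (disj_FG m k)]
  have h1 : ∀ A ∈ Fset m k, (X:Polynomial ℤ) ^ statF (insert (m+1) A) = X^(m+1) * X ^ statF A := by
    intro A hA
    obtain ⟨hsub, _, _, hmem⟩ := mem_Fset.mp hA
    rw [statF_insert_notmem (fun a ha => (Finset.mem_Icc.mp (hsub ha)).2) hmem, pow_add]
    ring
  have h2 : ∀ A ∈ Gset m k, (X:Polynomial ℤ) ^ statF (insert (m+1) A) = X * X ^ statF A := by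
    intro A hA
    obtain ⟨hsub, _, _, hmem⟩ := mem_Gset.mp hA
    rw [statF_insert_mem (fun a ha => (Finset.mem_Icc.mp (hsub ha)).2) hmem, pow_add]
    ring
  rw [Finset.sum_congr rfl h1, Finset.sum_congr rfl h2, ← Finset.mul_sum, ← Finset.mul_sum]
  rfl

lemma Gset_zero (m : ℕ) : Gset m 0 = ∅ := by
  ext A
  simp only [Finset.notMem_empty, iff_false]
  intro hA
  obtain ⟨_, hcard, _, hmem⟩ := mem_Gset.mp hA
  rw [Finset.card_eq_zero] at hcard
  subst hcard
  exact absurd hmem (Finset.notMem_empty m)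

lemma SG_zero (m : ℕ) : SG m 0 = 0 := by
  unfold SG; rw [Gset_zero]; simp


noncomputable def cF (m k : ℕ) : Polynomial ℤ :=
  if m ≤ 2*k then X^k * qBinom (m-1) k - X^(k+1) * qBinom (m-1) (k+1) else 0

noncomputable def cG (m k : ℕ) : Polynomial ℤ :=
  if m ≤ 2*k ∧ 1 ≤ m then X^m * (qBinom (m-1) (k-1) - qBinom (m-1) k) else 0

lemma cF_pos {m k : ℕ} (h : m ≤ 2*k) :
    cF m k = X^k * qBinom (m-1) k - X^(k+1) * qBinom (m-1) (k+1) := if_pos h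
lemma cF_neg {m k : ℕ} (h : ¬ m ≤ 2*k) : cF m k = 0 := if_neg h
lemma cG_pos {m k : ℕ} (h1 : m ≤ 2*k) (h2 : 1 ≤ m) :
    cG m k = X^m * (qBinom (m-1) (k-1) - qBinom (m-1) k) := if_pos ⟨h1, h2⟩
lemma cG_neg {m k : ℕ} (h : ¬(m ≤ 2*k ∧ 1 ≤ m)) : cG m k = 0 := if_neg h

lemma qBinom_succ_succ (n k : ℕ) :
    qBinom (n+1) (k+1) = qBinom n k + X ^ (k+1) * qBinom n (k+1) := rfl

lemma Fset_zero : ∀ k, Fset 0 k = if k = 0 then {∅} else ∅ := by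
  intro k
  ext A
  split_ifs with hk
  · subst hk
    simp only [Finset.mem_singleton, mem_Fset]
    constructor
    · rintro ⟨_, hcard, _, _⟩
      exact Finset.card_eq_zero.mp hcard
    · rintro rfl
      refine ⟨by simp, by simp, ?_, by simp⟩
      intro i hi
      rw [Finset.mem_Icc] at hi
      omega
  · simp only [Finset.notMem_empty, iff_false]
    intro hA
    obtain ⟨hsub, hcard, _, _⟩ := mem_Fset.mp hA
    have hemp : Finset.Icc 1 0 = (∅ : Finset ℕ) := by
      apply Finset.Icc_eq_empty; omega
    rw [hemp] at hsub
    have : A = ∅ := Finset.subset_empty.mp hsub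
    subst this
    simp at hcard
    exact hk hcard.symm

lemma Gset_zero_row (k : ℕ) : Gset 0 k = ∅ := by
  ext A
  simp only [Finset.notMem_empty, iff_false]
  intro hA
  obtain ⟨hsub, _, _, hmem⟩ := mem_Gset.mp hA
  have := Finset.mem_Icc.mp (hsub hmem)
  omega

lemma main_induction : ∀ m k, SF m k = cF m k ∧ SG m k = cG m k := by
  intro m
  induction m with
  | zero =>
    intro k
    constructor
    · rcases Nat.eq_zero_or_pos k with rfl | hk
      · have h1 : SF 0 0 = 1 := by
          rw [SF, Fset_zero 0, if_pos rfl, Finset.sum_singleton]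
          simp [statF]
        rw [h1, cF_pos (by omega)]
        rw [qBinom_zero_right, qBinom_eq_zero (show (0:ℕ)-1 < 0+1 by omega)]
        ring
      · have h1 : SF 0 k = 0 := by
          rw [SF, Fset_zero k, if_neg (by omega), Finset.sum_empty]
        rw [h1, cF_pos (by omega)]
        rw [qBinom_eq_zero (show (0:ℕ)-1 < k by omega),
          qBinom_eq_zero (show (0:ℕ)-1 < k+1 by omega)]
        ring
    · have h1 : SG 0 k = 0 := by
        rw [SG, Gset_zero_row, Finset.sum_empty]
      rw [h1, cG_neg (by omega)]
  | succ m ih =>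
    intro k
    constructor
    · -- SF part
      rw [SF_succ, (ih k).1, (ih k).2]
      rcases Nat.lt_or_ge (2*k) (m+1) with h | h
      · rw [if_neg (by omega), cF_neg (by omega)]
      · rw [if_pos (by omega)]
        have hk1 : 1 ≤ k := by omega
        obtain ⟨k', rfl⟩ : ∃ k', k = k' + 1 := ⟨k - 1, by omega⟩
        rw [cF_pos (show m+1 ≤ 2*(k'+1) by omega),
          cF_pos (show m ≤ 2*(k'+1) by omega)]
        simp only [Nat.add_sub_cancel]
        rcases Nat.eq_zero_or_pos m with rfl | hm
        · rw [cG_neg (by omega)]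
          simp only [Nat.zero_sub]
          ring
        · rw [cG_pos (show m ≤ 2*(k'+1) by omega) hm]
          obtain ⟨m', rfl⟩ : ∃ m', m = m' + 1 := ⟨m - 1, by omega⟩
          simp only [Nat.add_sub_cancel]
          rcases Nat.lt_or_ge m' k' with hmk | hmk
          · -- k' > m' : everything vanishes
            rw [qBinom_eq_zero (show m'+1 < k'+1 by omega),
              qBinom_eq_zero (show m'+1 < k'+1+1 by omega),
              qBinom_eq_zero (show m' < k' by omega),
              qBinom_eq_zero (show m' < k'+1 by omega),
              qBinom_eq_zero (show m' < k'+1+1 by omega)]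
            ring
          · rw [qBinom_pascal2 m' k', qBinom_pascal2 m' (k'+1)]
            rcases Nat.eq_or_lt_of_le hmk with heq | hlt
            · subst heq
              rw [qBinom_eq_zero (show k' < k'+1 by omega)]
              simp only [mul_zero, zero_mul, zero_add, add_zero, sub_zero,
                Nat.sub_self, pow_zero, one_mul]
              ring
            · have hx1 : (X : Polynomial ℤ)^(k'+1) * X^(m'-k') = X^(m'+1) := by
                rw [← pow_add]
                congr 1
                omega
              have hx2 : (X : Polynomial ℤ)^(k'+1+1) * X^(m'-(k'+1)) = X^(m'+1) := by
                rw [← pow_add]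
                congr 1
                omega
              linear_combination (-(qBinom m' k')) * hx1 + (qBinom m' (k'+1)) * hx2
    · -- SG part
      rcases Nat.eq_zero_or_pos k with rfl | hk
      · rw [SG_zero (m+1), cG_neg (by omega)]
      · obtain ⟨k', rfl⟩ : ∃ k', k = k' + 1 := ⟨k - 1, by omega⟩
        rw [SG_succ, (ih k').1, (ih k').2]
        rcases Nat.lt_or_ge (2*k') m with hr | hr
        · -- m > 2k'
          rw [cF_neg (by omega), cG_neg (by omega)]
          rcases Nat.lt_or_ge (2*(k'+1)) (m+1) with hr2 | hr2
          · rw [cG_neg (by omega)]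
            ring
          · have hm : m = 2*k' + 1 := by omega
            subst hm
            rw [cG_pos (by omega) (by omega)]
            simp only [Nat.add_sub_cancel]
            rw [qBinom_central k', sub_self]
            ring
        · -- m ≤ 2k'
          rw [cF_pos hr, cG_pos (show m+1 ≤ 2*(k'+1) by omega) (by omega)]
          simp only [Nat.add_sub_cancel]
          rcases Nat.eq_zero_or_pos m with rfl | hm
          · rw [cG_neg (by omega)]
            simp only [Nat.zero_sub]
            rcases Nat.eq_zero_or_pos k' with rfl | hk'
            · rw [qBinom_eq_zero (show (0:ℕ) < 0+1 by omega)]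
              ring
            · rw [qBinom_eq_zero (show (0:ℕ) < k' by omega),
                qBinom_eq_zero (show (0:ℕ) < k'+1 by omega)]
              ring
          · rw [cG_pos hr hm]
            have hk'1 : 1 ≤ k' := by omega
            obtain ⟨k'', rfl⟩ : ∃ k'', k' = k'' + 1 := ⟨k' - 1, by omega⟩
            obtain ⟨m'', rfl⟩ : ∃ m'', m = m'' + 1 := ⟨m - 1, by omega⟩
            simp only [Nat.add_sub_cancel]
            rw [qBinom_succ_succ m'' k'', qBinom_succ_succ m'' (k''+1)]
            ring


def Bset (m k : ℕ) : Finset (Finset ℕ) :=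
  ((Finset.Icc 1 m).powersetCard k).filter (fun A => Ballot m A)

lemma mem_Bset {m k : ℕ} {A : Finset ℕ} :
    A ∈ Bset m k ↔ A ⊆ Finset.Icc 1 m ∧ A.card = k ∧ Ballot m A := by
  simp [Bset, Finset.mem_powersetCard, and_assoc]

lemma Bset_eq (m k : ℕ) : Bset m k = Fset m k ∪ Gset m k := by
  ext A
  simp only [Finset.mem_union, mem_Bset, mem_Fset, mem_Gset]
  constructor
  · rintro ⟨h1, h2, h3⟩
    rcases Finset.decidableMem m A with hm | hm
    · exact Or.inl ⟨h1, h2, h3, hm⟩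
    · exact Or.inr ⟨h1, h2, h3, hm⟩
  · rintro (⟨h1, h2, h3, _⟩ | ⟨h1, h2, h3, _⟩) <;> exact ⟨h1, h2, h3⟩

lemma ballot_sum (n : ℕ) (hn : 1 ≤ n) :
    (∑ A ∈ Bset (2*n) n, (X:Polynomial ℤ) ^ statF A)
      = X^n * qBinom (2*n-1) n - X^(n+1) * qBinom (2*n-1) (n+1) := by
  rw [Bset_eq, Finset.sum_union (disj_FG _ _)]
  have h1 := (main_induction (2*n) n).1
  have h2 := (main_induction (2*n) n).2
  rw [SF] at h1
  rw [SG] at h2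
  rw [h1, h2, cF_pos (le_refl _), cG_pos (le_refl _) (by omega)]
  obtain ⟨j, rfl⟩ : ∃ j, n = j + 1 := ⟨n-1, by omega⟩
  have hi : 2*(j+1) - 1 = 2*j+1 := by omega
  have hi2 : (j+1) - 1 = j := by omega
  rw [hi, hi2, qBinom_central j, sub_self, mul_zero, add_zero]

/-! ### counting lemmas for order embeddings -/

lemma H1 (s : Finset ℕ) {k : ℕ} (h : s.card = k) (i : Fin k) :
    (s.filter (fun x => x ≤ s.orderEmbOfFin h i)).card = i + 1 := by
  have himg : s.filter (fun x => x ≤ s.orderEmbOfFin h i) =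
      (Finset.Iic i).image (s.orderEmbOfFin h) := by
    ext x
    simp only [Finset.mem_filter, Finset.mem_image, Finset.mem_Iic]
    constructor
    · rintro ⟨hx, hle⟩
      have hrange : x ∈ Set.range (s.orderEmbOfFin h) := by
        rw [Finset.range_orderEmbOfFin]; exact hx
      obtain ⟨j, rfl⟩ := hrange
      exact ⟨j, by rwa [OrderEmbedding.le_iff_le] at hle, rfl⟩
    · rintro ⟨j, hj, rfl⟩
      exact ⟨Finset.orderEmbOfFin_mem s h j, by rwa [OrderEmbedding.le_iff_le]⟩
  rw [himg, Finset.card_image_of_injective _ (s.orderEmbOfFin h).injective, Fin.card_Iic]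

lemma H3 (s : Finset ℕ) {k : ℕ} (h : s.card = k) (i : Fin k) {v : ℕ}
    (hv : s.orderEmbOfFin h i ≤ v) :
    i + 1 ≤ (s.filter (fun x => x ≤ v)).card := by
  rw [← H1 s h i]
  apply Finset.card_le_card
  intro x hx
  rw [Finset.mem_filter] at hx ⊢
  exact ⟨hx.1, hx.2.trans hv⟩

lemma H2 (s : Finset ℕ) {k : ℕ} (h : s.card = k) (i : Fin k) {v : ℕ}
    (hv : i + 1 ≤ (s.filter (fun x => x ≤ v)).card) :
    s.orderEmbOfFin h i ≤ v := by
  by_contra hlt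
  push_neg at hlt
  have hsub : s.filter (fun x => x ≤ v) ⊆
      (s.filter (fun x => x ≤ s.orderEmbOfFin h i)).erase (s.orderEmbOfFin h i) := by
    intro x hx
    rw [Finset.mem_filter] at hx
    rw [Finset.mem_erase, Finset.mem_filter]
    refine ⟨by omega, hx.1, by omega⟩
  have hcc := Finset.card_le_card hsub
  have hmemf : s.orderEmbOfFin h i ∈ s.filter (fun x => x ≤ s.orderEmbOfFin h i) :=
    Finset.mem_filter.mpr ⟨Finset.orderEmbOfFin_mem s h i, le_refl _⟩
  rw [Finset.card_erase_of_mem hmemf, H1 s h i] at hcc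
  omega

lemma filter_le_eq_inter {A : Finset ℕ} {m : ℕ} (hA : A ⊆ Finset.Icc 1 m) (v : ℕ) :
    A.filter (fun x => x ≤ v) = A ∩ Finset.Icc 1 v := by
  ext x
  simp only [Finset.mem_filter, Finset.mem_inter, Finset.mem_Icc]
  constructor
  · rintro ⟨hx, hle⟩
    have := Finset.mem_Icc.mp (hA hx)
    exact ⟨hx, this.1, hle⟩
  · rintro ⟨hx, _, hle⟩
    exact ⟨hx, hle⟩

lemma count_partition {n : ℕ} {A : Finset ℕ} (hA : A ⊆ Finset.Icc 1 (2*n)) {v : ℕ}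
    (hv : v ≤ 2*n) :
    (A ∩ Finset.Icc 1 v).card + ((Finset.Icc 1 (2*n) \ A) ∩ Finset.Icc 1 v).card = v := by
  have hdisj : Disjoint (A ∩ Finset.Icc 1 v) ((Finset.Icc 1 (2*n) \ A) ∩ Finset.Icc 1 v) :=
    Finset.disjoint_sdiff.mono Finset.inter_subset_left Finset.inter_subset_left
  have hunion : (A ∩ Finset.Icc 1 v) ∪ ((Finset.Icc 1 (2*n) \ A) ∩ Finset.Icc 1 v)
      = Finset.Icc 1 v := by
    rw [← Finset.union_inter_distrib_right, Finset.union_sdiff_of_subset hA,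
      Finset.inter_eq_right.mpr (Finset.Icc_subset_Icc_right hv)]
  have := Finset.card_union_of_disjoint hdisj
  rw [hunion, Nat.card_Icc] at this
  omega

lemma ballot_iff_col {n : ℕ} {A : Finset ℕ} (hA : A ⊆ Finset.Icc 1 (2*n))
    (hcard : A.card = n) (hCcard : (Finset.Icc 1 (2*n) \ A).card = n) :
    Ballot (2*n) A ↔
      ∀ i : Fin n, A.orderEmbOfFin hcard i < (Finset.Icc 1 (2*n) \ A).orderEmbOfFin hCcard i := by
  set C := Finset.Icc 1 (2*n) \ A with hC
  have hCsub : C ⊆ Finset.Icc 1 (2*n) := Finset.sdiff_subset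
  constructor
  · intro hb i
    set v := C.orderEmbOfFin hCcard i with hv
    have hvC : v ∈ C := Finset.orderEmbOfFin_mem C hCcard i
    have hvI := Finset.mem_Icc.mp (hCsub hvC)
    have hcv : (C.filter (fun x => x ≤ v)).card = i + 1 := H1 C hCcard i
    have htot := count_partition hA (hvI.2)
    rw [← filter_le_eq_inter hA v, ← filter_le_eq_inter hCsub v] at htot
    have hball := hb v (Finset.mem_Icc.mpr hvI)
    rw [← filter_le_eq_inter hA v] at hball
    have hAcount : (i:ℕ) + 1 ≤ (A.filter (fun x => x ≤ v)).card := by omega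
    have hle : A.orderEmbOfFin hcard i ≤ v := H2 A hcard i hAcount
    have hne : A.orderEmbOfFin hcard i ≠ v := by
      intro he
      have h1 : A.orderEmbOfFin hcard i ∈ A := Finset.orderEmbOfFin_mem A hcard i
      rw [he] at h1
      exact (Finset.mem_sdiff.mp hvC).2 h1
    omega
  · intro hcol v hvmem
    have hvI := Finset.mem_Icc.mp hvmem
    rw [← filter_le_eq_inter hA v]
    have htot := count_partition hA hvI.2
    rw [← filter_le_eq_inter hA v, ← filter_le_eq_inter hCsub v] at htot
    set s := (C.filter (fun x => x ≤ v)).card with hs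
    set t := (A.filter (fun x => x ≤ v)).card with ht
    rcases Nat.eq_zero_or_pos s with hs0 | hspos
    · omega
    · have hsn : s ≤ n := by
        rw [hs, ← hCcard]
        exact Finset.card_le_card (Finset.filter_subset _ _)
      set i : Fin n := ⟨s - 1, by omega⟩ with hi
      have hbi : C.orderEmbOfFin hCcard i ≤ v := by
        apply H2 C hCcard i
        rw [← hs]
        simp only [hi]
        omega
      have hai : A.orderEmbOfFin hcard i ≤ v := le_of_lt (lt_of_lt_of_le (hcol i) hbi)
      have := H3 A hcard i hai
      rw [← ht] at this
      simp only [hi] at this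
      omega

lemma two_n_notMem {n : ℕ} (hn : 1 ≤ n) {A : Finset ℕ} (hA : A ⊆ Finset.Icc 1 (2*n))
    (hcard : A.card = n) (hbal : Ballot (2*n) A) : 2*n ∉ A := by
  intro hmem
  have hball := hbal (2*n-1) (Finset.mem_Icc.mpr ⟨by omega, by omega⟩)
  have he : A ∩ Finset.Icc 1 (2*n-1) = A.erase (2*n) := by
    ext x
    simp only [Finset.mem_inter, Finset.mem_erase, Finset.mem_Icc]
    constructor
    · rintro ⟨hx, h1, h2⟩
      exact ⟨by omega, hx⟩
    · rintro ⟨hne, hx⟩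
      have := Finset.mem_Icc.mp (hA hx)
      exact ⟨hx, by omega, by omega⟩
  rw [he, Finset.card_erase_of_mem hmem, hcard] at hball
  omega

/-! ### the map from subsets to tableaux -/

noncomputable def phi (n : ℕ) (A : Finset ℕ) : (Fin n → ℕ) × (Fin n → ℕ) :=
  if h : A.card = n ∧ (Finset.Icc 1 (2*n) \ A).card = n then
    (fun i => A.orderEmbOfFin h.1 i, fun i => (Finset.Icc 1 (2*n) \ A).orderEmbOfFin h.2 i)
  else (fun _ => 0, fun _ => 0)

lemma comp_card {n : ℕ} {A : Finset ℕ} (hA : A ⊆ Finset.Icc 1 (2*n)) (hcard : A.card = n) :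
    (Finset.Icc 1 (2*n) \ A).card = n := by
  rw [Finset.card_sdiff_of_subset hA, Nat.card_Icc, hcard]
  omega

lemma phi_eq {n : ℕ} {A : Finset ℕ} (h1 : A.card = n) (h2 : (Finset.Icc 1 (2*n) \ A).card = n) :
    phi n A = (fun i => A.orderEmbOfFin h1 i,
      fun i => (Finset.Icc 1 (2*n) \ A).orderEmbOfFin h2 i) := by
  rw [phi, dif_pos ⟨h1, h2⟩]

lemma phi_mem_SYT {n : ℕ} (hn : 1 ≤ n) {A : Finset ℕ} (hA : A ∈ Bset (2*n) n) :
    phi n A ∈ SYT n := by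
  obtain ⟨hsub, hcard, hbal⟩ := mem_Bset.mp hA
  have hCcard := comp_card hsub hcard
  rw [phi_eq hcard hCcard]
  refine ⟨(A.orderEmbOfFin hcard).strictMono, ((Finset.Icc 1 (2*n) \ A).orderEmbOfFin hCcard).strictMono, ?_, ?_⟩
  · exact (ballot_iff_col hsub hcard hCcard).mp hbal
  · show Set.range (A.orderEmbOfFin hcard) ∪ Set.range ((Finset.Icc 1 (2*n) \ A).orderEmbOfFin hCcard) = _
    rw [Finset.range_orderEmbOfFin, Finset.range_orderEmbOfFin, ← Finset.coe_union,
      Finset.union_sdiff_of_subset hsub, Finset.coe_Icc]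

lemma image_phi_fst {n : ℕ} {A : Finset ℕ} (hA : A ∈ Bset (2*n) n) :
    Finset.image (phi n A).1 Finset.univ = A := by
  obtain ⟨hsub, hcard, hbal⟩ := mem_Bset.mp hA
  have hCcard := comp_card hsub hcard
  rw [phi_eq hcard hCcard]
  ext x
  simp only [Finset.mem_image, Finset.mem_univ, true_and]
  constructor
  · rintro ⟨i, rfl⟩
    exact Finset.orderEmbOfFin_mem A hcard i
  · intro hx
    have : x ∈ Set.range (A.orderEmbOfFin hcard) := by
      rw [Finset.range_orderEmbOfFin]; exact hx
    obtain ⟨i, rfl⟩ := this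
    exact ⟨i, rfl⟩

lemma maj_phi {n : ℕ} (hn : 1 ≤ n) {A : Finset ℕ} (hA : A ∈ Bset (2*n) n) :
    maj (phi n A) = statF A := by
  obtain ⟨hsub, hcard, hbal⟩ := mem_Bset.mp hA
  have hCcard := comp_card hsub hcard
  unfold maj statF
  rw [image_phi_fst hA]
  apply Finset.sum_congr
  · apply Finset.filter_congr
    intro x hx
    have hxI := Finset.mem_Icc.mp (hsub hx)
    have hxne : x ≠ 2*n := fun he => two_n_notMem hn hsub hcard hbal (he ▸ hx)
    rw [phi_eq hcard hCcard]
    simp only [eq_iff_iff]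
    constructor
    · rintro ⟨j, hj⟩
      have : (Finset.Icc 1 (2*n) \ A).orderEmbOfFin hCcard j ∈ Finset.Icc 1 (2*n) \ A :=
        Finset.orderEmbOfFin_mem _ hCcard j
      rw [hj] at this
      exact (Finset.mem_sdiff.mp this).2
    · intro hnot
      have hmem : x + 1 ∈ Finset.Icc 1 (2*n) \ A :=
        Finset.mem_sdiff.mpr ⟨Finset.mem_Icc.mpr ⟨by omega, by omega⟩, hnot⟩
      have : (x+1 : ℕ) ∈ Set.range ((Finset.Icc 1 (2*n) \ A).orderEmbOfFin hCcard) := by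
        rw [Finset.range_orderEmbOfFin]; exact hmem
      obtain ⟨j, hj⟩ := this
      exact ⟨j, hj⟩
  · intro x _
    rfl

lemma phi_surj {n : ℕ} (hn : 1 ≤ n) {T : (Fin n → ℕ) × (Fin n → ℕ)} (hT : T ∈ SYT n) :
    ∃ A ∈ Bset (2*n) n, phi n A = T := by
  obtain ⟨h1, h2, h3, h4⟩ := hT
  set A := Finset.image T.1 Finset.univ with hAdef
  set B2 := Finset.image T.2 Finset.univ with hBdef
  have hcA : ↑A = Set.range T.1 := by
    rw [hAdef, Finset.coe_image, Finset.coe_univ, Set.image_univ]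
  have hcB : ↑B2 = Set.range T.2 := by
    rw [hBdef, Finset.coe_image, Finset.coe_univ, Set.image_univ]
  have hAcard : A.card = n := by
    rw [hAdef, Finset.card_image_of_injective _ h1.injective, Finset.card_univ,
      Fintype.card_fin]
  have hBcard : B2.card = n := by
    rw [hBdef, Finset.card_image_of_injective _ h2.injective, Finset.card_univ,
      Fintype.card_fin]
  have hunion : A ∪ B2 = Finset.Icc 1 (2*n) := by
    apply Finset.coe_injective
    rw [Finset.coe_union, hcA, hcB, h4, Finset.coe_Icc]
  have hsubA : A ⊆ Finset.Icc 1 (2*n) := by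
    rw [← hunion]; exact Finset.subset_union_left
  have hsubB : B2 ⊆ Finset.Icc 1 (2*n) := by
    rw [← hunion]; exact Finset.subset_union_right
  have hicard : (A ∩ B2).card = 0 := by
    have := Finset.card_union_add_card_inter A B2
    rw [hunion, Nat.card_Icc, hAcard, hBcard] at this
    omega
  have hinter : A ∩ B2 = ∅ := Finset.card_eq_zero.mp hicard
  have hCcard := comp_card hsubA hAcard
  have hB2C : B2 = Finset.Icc 1 (2*n) \ A := by
    apply Finset.eq_of_subset_of_card_le
    · intro x hx
      rw [Finset.mem_sdiff]
      refine ⟨hsubB hx, fun hxa => ?_⟩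
      have : x ∈ A ∩ B2 := Finset.mem_inter.mpr ⟨hxa, hx⟩
      rw [hinter] at this
      exact Finset.notMem_empty x this
    · rw [hCcard, hBcard]
  have hT1 : T.1 = ⇑(A.orderEmbOfFin hAcard) := by
    apply Finset.orderEmbOfFin_unique hAcard _ h1
    intro x
    exact Finset.mem_image.mpr ⟨x, Finset.mem_univ x, rfl⟩
  have hT2 : T.2 = ⇑((Finset.Icc 1 (2*n) \ A).orderEmbOfFin hCcard) := by
    apply Finset.orderEmbOfFin_unique hCcard _ h2
    intro x
    rw [← hB2C]
    exact Finset.mem_image.mpr ⟨x, Finset.mem_univ x, rfl⟩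
  have hbal : Ballot (2*n) A := by
    rw [ballot_iff_col hsubA hAcard hCcard]
    intro i
    have := h3 i
    rw [hT1, hT2] at this
    exact this
  refine ⟨A, mem_Bset.mpr ⟨hsubA, hAcard, hbal⟩, ?_⟩
  rw [phi_eq hAcard hCcard]
  ext i
  · rw [hT1]
  · rw [hT2]

lemma SYT_eq_image {n : ℕ} (hn : 1 ≤ n) : SYT n = phi n '' ↑(Bset (2*n) n) := by
  ext T
  constructor
  · intro hT
    obtain ⟨A, hA, hphi⟩ := phi_surj hn hT
    exact ⟨A, hA, hphi⟩
  · rintro ⟨A, hA, rfl⟩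
    exact phi_mem_SYT hn hA

lemma phi_injOn {n : ℕ} : Set.InjOn (phi n) ↑(Bset (2*n) n) := by
  intro A hA B hB hphi
  have h1 := image_phi_fst (Finset.mem_coe.mp hA)
  have h2 := image_phi_fst (Finset.mem_coe.mp hB)
  rw [← h1, ← h2, hphi]


/-- [n+1]_q · Σ_{T ∈ SYT(2×n)} q^maj(T) = q^n · [2n choose n]_q. -/
theorem cqn (n : ℕ) (hn : 1 ≤ n) :
    qInt (n + 1) * ∑ᶠ T ∈ SYT n, (X : Polynomial ℤ) ^ maj T
      = X ^ n * qBinom (2 * n) n := by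
  have h1 : (∑ᶠ T ∈ SYT n, (X : Polynomial ℤ) ^ maj T)
      = ∑ A ∈ Bset (2*n) n, (X : Polynomial ℤ) ^ statF A := by
    rw [SYT_eq_image hn, finsum_mem_image phi_injOn, finsum_mem_coe_finset]
    exact Finset.sum_congr rfl (fun A hA => by rw [maj_phi hn hA])
  rw [h1, ballot_sum n hn]
  exact final_identity n hn
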